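/- Let 1 < p < 2, a > 0, ℓ > 0, M > 0, and let B = B_{2R}(X₀) ⊂ ℝ^N be a ball. Suppose u ∈ L^∞(B) with |u| ≤ M a.e., χ : B → [0,1] is measurable, and V, W ∈ L^p(B; ℝ^N) satisfy ∫_B ‖V‖^{p−2} V · (V − W) = ∫_B (a u + ℓ χ)(V_N − W_N) and ∫_B ‖W‖^{p−2} W · (V − W) = 0 (with the convention ‖ξ‖^{p−2}ξ = 0 when ξ = 0). Then there is a constant C > 0 depending only on p, N, a, ℓ, M such that ∫_B ‖V − W‖^p ≤ C |B|^{p−1} ( ∫_B ‖V‖^p )^{2−p}, where |B| denotes the Lebesgue measure of B. -/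

import Mathlib

open MeasureTheory Metric Set Filter
open scoped RealInnerProductSpace Topology

noncomputable section

open scoped ENNReal NNReal

namespace CompEst

lemma rpow_concave_aux {q x : ℝ} (hq0 : 0 < q) (hq1 : q < 1) (hx : 0 ≤ x) :
    x ^ q ≤ 1 - q + q * x := by
  have h := Real.geom_mean_le_arith_mean2_weighted (le_of_lt hq0) (by linarith : (0:ℝ) ≤ 1 - q)
    hx zero_le_one (by ring)
  rw [Real.one_rpow, mul_one] at h
  linarith

lemma rpow_sub_two_mul_sq {x : ℝ} (hx : 0 < x) (p : ℝ) : x ^ (p - 2) * x ^ 2 = x ^ p := by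
  rw [show (x:ℝ) ^ 2 = x ^ (2:ℝ) by rw [← Real.rpow_natCast x 2]; norm_num,
    ← Real.rpow_add hx]
  ring_nf

lemma rpow_sub_two_mul_self {x : ℝ} (hx : 0 < x) (p : ℝ) : x ^ (p - 2) * x = x ^ (p - 1) := by
  rw [show x ^ (p - 2) * x = x ^ (p - 2) * x ^ (1:ℝ) by rw [Real.rpow_one],
    ← Real.rpow_add hx]
  ring_nf

lemma diff_rpow_ge {q s t : ℝ} (hq0 : 0 < q) (hq1 : q < 1) (ht : 0 ≤ t) (hts : t ≤ s) :
    q * (s - t) * (s + t) ^ (q - 1) ≤ s ^ q - t ^ q := by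
  rcases eq_or_lt_of_le (ht.trans hts) with hs | hs
  · have hs0 : s = 0 := hs.symm
    have ht0 : t = 0 := le_antisymm (hs0 ▸ hts) ht
    simp [hs0, ht0]
  · -- 0 < s
    set x := t / s with hxdef
    have hx0 : 0 ≤ x := div_nonneg ht hs.le
    have hx1 : x ≤ 1 := (div_le_one hs).2 hts
    have htx : t = s * x := by rw [hxdef]; field_simp
    have hA : t ^ q = s ^ q * x ^ q := by
      rw [htx, Real.mul_rpow hs.le hx0]
    have hconc := rpow_concave_aux hq0 hq1 hx0
    have hsq : (0:ℝ) < s ^ q := Real.rpow_pos_of_pos hs q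
    have hsq1 : s ^ (q - 1) * s = s ^ q := by
      rw [show s ^ (q-1) * s = s ^ (q-1) * s ^ (1:ℝ) by rw [Real.rpow_one],
        ← Real.rpow_add hs]; ring_nf
    have hsqx : s ^ q * x = s ^ (q - 1) * t := by
      rw [htx, ← hsq1]; ring
    -- s^q - t^q ≥ q * s^(q-1) * (s - t)
    have h1 : q * s ^ (q - 1) * (s - t) ≤ s ^ q - t ^ q := by
      have := mul_le_mul_of_nonneg_left hconc hsq.le
      rw [← hA] at this
      nlinarith [this, hsqx, hsq1]
    -- (s+t)^(q-1) ≤ s^(q-1)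
    have h2 : (s + t) ^ (q - 1) ≤ s ^ (q - 1) :=
      Real.rpow_le_rpow_of_nonpos hs (by linarith) (by linarith)
    have h3 : q * (s - t) * (s + t) ^ (q - 1) ≤ q * (s - t) * s ^ (q - 1) := by
      apply mul_le_mul_of_nonneg_left h2
      exact mul_nonneg hq0.le (by linarith)
    calc q * (s - t) * (s + t) ^ (q - 1) ≤ q * (s - t) * s ^ (q - 1) := h3
      _ = q * s ^ (q - 1) * (s - t) := by ring
      _ ≤ s ^ q - t ^ q := h1


lemma add_rpow_le_two_rpow {p s t : ℝ} (hp : 1 ≤ p) (hs : 0 ≤ s) (ht : 0 ≤ t) :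
    (s + t) ^ p ≤ 2 ^ (p - 1) * (s ^ p + t ^ p) := by
  have h := NNReal.rpow_add_le_mul_rpow_add_rpow s.toNNReal t.toNNReal hp
  have h2 := NNReal.coe_le_coe.2 h
  push_cast [Real.coe_toNNReal _ hs, Real.coe_toNNReal _ ht] at h2
  convert h2 using 2 <;> norm_num

lemma key_scalar_aux {p : ℝ} (hp1 : 1 < p) (hp2 : p < 2) {s t c : ℝ}
    (ht : 0 ≤ t) (hts : t ≤ s) (hc : |c| ≤ s * t) :
    min (p - 1) 2⁻¹ * ((s ^ 2 + t ^ 2 - 2 * c) * (s + t) ^ (p - 2))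
      ≤ s ^ p + t ^ p - (s ^ (p - 2) + t ^ (p - 2)) * c := by
  set μ : ℝ := min (p - 1) 2⁻¹ with hμdef
  have hμ0 : 0 < μ := lt_min (by linarith) (by norm_num)
  have hμq : μ ≤ p - 1 := min_le_left _ _
  have hμh : μ ≤ 2⁻¹ := min_le_right _ _
  rcases eq_or_lt_of_le (ht.trans hts) with hs | hs
  · -- s = 0, hence t = 0, c = 0
    have hs0 : s = 0 := hs.symm
    have ht0 : t = 0 := le_antisymm (hs0 ▸ hts) ht
    have hc0 : c = 0 := by
      have h := hc
      rw [hs0, ht0, mul_zero] at h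
      exact abs_eq_zero.mp (le_antisymm h (abs_nonneg c))
    rw [hs0, ht0, hc0]
    simp [Real.zero_rpow (by linarith : p - 2 ≠ 0), Real.zero_rpow (by linarith : p ≠ 0)]
  · -- 0 < s
    have hst : 0 < s + t := by linarith
    have hA0 : (0:ℝ) ≤ (s + t) ^ (p - 2) := Real.rpow_nonneg hst.le _
    have hB0 : (0:ℝ) ≤ s ^ (p - 2) + t ^ (p - 2) :=
      add_nonneg (Real.rpow_nonneg (by linarith) _) (Real.rpow_nonneg ht _)
    -- identities
    have hsp1 : s ^ (p - 2) * s = s ^ (p - 1) := rpow_sub_two_mul_self hs p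
    have hsp : s ^ (p - 1) * s = s ^ p := by
      rw [show s ^ (p-1) * s = s ^ (p-1) * s ^ (1:ℝ) by rw [Real.rpow_one],
        ← Real.rpow_add hs]; ring_nf
    have htp1 : t ^ (p - 2) * t = t ^ (p - 1) := by
      rcases eq_or_lt_of_le ht with h0 | h0
      · rw [← h0]; simp [Real.zero_rpow (by linarith : p - 2 ≠ 0),
          Real.zero_rpow (by linarith : p - 1 ≠ 0)]
      · exact rpow_sub_two_mul_self h0 p
    have htp : t ^ (p - 1) * t = t ^ p := by
      rcases eq_or_lt_of_le ht with h0 | h0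
      · rw [← h0]; simp [Real.zero_rpow (by linarith : p - 1 ≠ 0),
          Real.zero_rpow (by linarith : p ≠ 0)]
      · rw [show t ^ (p-1) * t = t ^ (p-1) * t ^ (1:ℝ) by rw [Real.rpow_one],
          ← Real.rpow_add h0]; ring_nf
    -- endpoint E+
    have hdiff := diff_rpow_ge (q := p - 1) (by linarith) (by linarith) ht hts
    rw [show p - 1 - 1 = p - 2 by ring] at hdiff
    have hEp : μ * ((s - t) ^ 2 * (s + t) ^ (p - 2))
        ≤ s ^ p + t ^ p - (s ^ (p - 2) + t ^ (p - 2)) * (s * t) := by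
      have hfac : s ^ p + t ^ p - (s ^ (p - 2) + t ^ (p - 2)) * (s * t)
          = (s - t) * (s ^ (p - 1) - t ^ (p - 1)) := by
        nlinarith [hsp1, hsp, htp1, htp]
      rw [hfac]
      have h1 : μ * (s - t) * (s + t) ^ (p - 2) ≤ (p-1) * (s - t) * (s + t) ^ (p - 2) := by
        apply mul_le_mul_of_nonneg_right _ hA0
        exact mul_le_mul_of_nonneg_right hμq (by linarith)
      nlinarith [mul_le_mul_of_nonneg_left (h1.trans hdiff) (show (0:ℝ) ≤ s - t by linarith)]
    -- endpoint E-
    have hEm : μ * ((s + t) ^ 2 * (s + t) ^ (p - 2))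
        ≤ s ^ p + t ^ p + (s ^ (p - 2) + t ^ (p - 2)) * (s * t) := by
      have hid : (s + t) ^ 2 * (s + t) ^ (p - 2) = (s + t) ^ p := by
        rw [mul_comm]; exact rpow_sub_two_mul_sq hst p
      rw [hid]
      have h2 : (s + t) ^ p ≤ 2 ^ (p - 1) * (s ^ p + t ^ p) :=
        add_rpow_le_two_rpow (by linarith) (by linarith) ht
      have h3 : (2:ℝ) ^ (p - 1) ≤ 2 := by
        calc (2:ℝ) ^ (p - 1) ≤ 2 ^ (1:ℝ) :=
          Real.rpow_le_rpow_of_exponent_le (by norm_num) (by linarith)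
        _ = 2 := Real.rpow_one 2
      have h4 : 0 ≤ s ^ p + t ^ p :=
        add_nonneg (Real.rpow_nonneg (by linarith) _) (Real.rpow_nonneg ht _)
      have h5 : 0 ≤ (s ^ (p - 2) + t ^ (p - 2)) * (s * t) :=
        mul_nonneg hB0 (mul_nonneg (by linarith) ht)
      have h6 : μ * 2 ^ (p - 1) ≤ 1 := by
        nlinarith [mul_le_mul_of_nonneg_right hμh
          (Real.rpow_nonneg (by norm_num : (0:ℝ) ≤ 2) (p - 1))]
      nlinarith [mul_le_mul_of_nonneg_left h2 hμ0.le,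
        mul_le_mul_of_nonneg_right h6 h4]
    -- interpolation in c
    obtain ⟨hc1, hc2⟩ := abs_le.mp hc
    rcases le_total (s ^ (p - 2) + t ^ (p - 2)) (2 * μ * (s + t) ^ (p - 2)) with hcase | hcase
    · have hprod : 0 ≤ (c + s * t) * (2 * μ * (s + t) ^ (p - 2) - (s ^ (p - 2) + t ^ (p - 2))) :=
        mul_nonneg (by linarith) (by linarith)
      linarith [hEm, hprod]
    · have hprod : 0 ≤ (s * t - c) * ((s ^ (p - 2) + t ^ (p - 2)) - 2 * μ * (s + t) ^ (p - 2)) :=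
        mul_nonneg (by linarith) (by linarith)
      linarith [hEp, hprod]

lemma key_scalar {p : ℝ} (hp1 : 1 < p) (hp2 : p < 2) {s t c : ℝ}
    (hs : 0 ≤ s) (ht : 0 ≤ t) (hc : |c| ≤ s * t) :
    min (p - 1) 2⁻¹ * ((s ^ 2 + t ^ 2 - 2 * c) * (s + t) ^ (p - 2))
      ≤ s ^ p + t ^ p - (s ^ (p - 2) + t ^ (p - 2)) * c := by
  rcases le_total t s with h | h
  · exact key_scalar_aux hp1 hp2 ht h hc
  · have := key_scalar_aux hp1 hp2 hs h (by rwa [mul_comm])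
    rw [show t + s = s + t by ring] at this
    linarith [this]


lemma rpow_sub_two_mul_sq' {x p : ℝ} (hp1 : 1 < p) (hp2 : p < 2) (hx : 0 ≤ x) :
    x ^ (p - 2) * x ^ 2 = x ^ p := by
  rcases eq_or_lt_of_le hx with h | h
  · rw [← h]
    simp [Real.zero_rpow (show p - 2 ≠ 0 by linarith), Real.zero_rpow (show p ≠ 0 by linarith)]
  · exact rpow_sub_two_mul_sq h p

lemma coercivity {E : Type*} [NormedAddCommGroup E] [InnerProductSpace ℝ E]
    {p : ℝ} (hp1 : 1 < p) (hp2 : p < 2) (ξ η : E) :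
    min (p - 1) 2⁻¹ * (‖ξ - η‖ ^ 2 * (‖ξ‖ + ‖η‖) ^ (p - 2))
      ≤ ‖ξ‖ ^ (p - 2) * ⟪ξ, ξ - η⟫ - ‖η‖ ^ (p - 2) * ⟪η, ξ - η⟫ := by
  have hc : |⟪ξ, η⟫| ≤ ‖ξ‖ * ‖η‖ := abs_real_inner_le_norm ξ η
  have key := key_scalar hp1 hp2 (norm_nonneg ξ) (norm_nonneg η) hc
  have h1 : ⟪ξ, ξ - η⟫ = ‖ξ‖ ^ 2 - ⟪ξ, η⟫ := by
    rw [inner_sub_right, real_inner_self_eq_norm_sq]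
  have h2 : ⟪η, ξ - η⟫ = ⟪ξ, η⟫ - ‖η‖ ^ 2 := by
    rw [inner_sub_right, real_inner_self_eq_norm_sq, real_inner_comm]
  have h3 : ‖ξ - η‖ ^ 2 = ‖ξ‖ ^ 2 - 2 * ⟪ξ, η⟫ + ‖η‖ ^ 2 := norm_sub_sq_real ξ η
  have e1 : ‖ξ‖ ^ (p - 2) * ‖ξ‖ ^ 2 = ‖ξ‖ ^ p := rpow_sub_two_mul_sq' hp1 hp2 (norm_nonneg ξ)
  have e2 : ‖η‖ ^ (p - 2) * ‖η‖ ^ 2 = ‖η‖ ^ p := rpow_sub_two_mul_sq' hp1 hp2 (norm_nonneg η)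
  rw [h1, h2, h3]
  nlinarith [key, e1, e2]

lemma coord_le_norm {N : ℕ} (x : EuclideanSpace ℝ (Fin N)) (i : Fin N) : |x i| ≤ ‖x‖ := by
  have h := abs_real_inner_le_norm (EuclideanSpace.single i (1:ℝ)) x
  rw [EuclideanSpace.inner_single_left] at h
  simpa [EuclideanSpace.norm_single] using h

lemma integrable_mul_holder {α : Type*} [MeasurableSpace α] {μ : Measure α} {r s : ℝ}
    (hrs : r.HolderConjugate s) {f g : α → ℝ}
    (hf : MemLp f (ENNReal.ofReal r) μ) (hg : MemLp g (ENNReal.ofReal s) μ) :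
    Integrable (fun x => f x * g x) μ := by
  rw [← memLp_one_iff_integrable]
  have hpqr : (1 : ℝ≥0∞) / 1 = 1 / ENNReal.ofReal r + 1 / ENNReal.ofReal s := by
    rw [one_div, one_div, one_div, ← ENNReal.ofReal_inv_of_pos hrs.pos,
      ← ENNReal.ofReal_inv_of_pos hrs.symm.pos, ← ENNReal.ofReal_add (inv_nonneg.mpr hrs.nonneg) (inv_nonneg.mpr hrs.symm.nonneg),
      hrs.inv_add_inv_eq_one, ENNReal.ofReal_one, inv_one]
  haveI := hrs.ennrealOfReal
  exact hg.smul (𝕜 := ℝ) hf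

lemma memℒp_of_integrable_rpow {α : Type*} [MeasurableSpace α] {μ : Measure α} {r : ℝ}
    (hr : 1 ≤ r) {f : α → ℝ} (hf0 : ∀ x, 0 ≤ f x) (hfm : AEStronglyMeasurable f μ)
    (hfi : Integrable (fun x => f x ^ r) μ) : MemLp f (ENNReal.ofReal r) μ := by
  have hr0 : (0:ℝ) < r := by linarith
  rw [← memLp_norm_rpow_iff (q := ENNReal.ofReal r) hfm
    (by simp [hr0, ENNReal.ofReal_eq_zero, not_le]) ENNReal.ofReal_ne_top,
    ENNReal.toReal_ofReal hr0.le, ENNReal.div_self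
      (by simp [ENNReal.ofReal_eq_zero, not_le, hr0]) ENNReal.ofReal_ne_top,
    memLp_one_iff_integrable]
  refine hfi.congr (Eventually.of_forall fun x => ?_)
  simp [Real.norm_of_nonneg (hf0 x)]

lemma holder_int {α : Type*} [MeasurableSpace α] {μ : Measure α} {r s : ℝ}
    (hrs : r.HolderConjugate s) {f g : α → ℝ} (hf0 : ∀ x, 0 ≤ f x) (hg0 : ∀ x, 0 ≤ g x)
    (hfm : AEStronglyMeasurable f μ) (hgm : AEStronglyMeasurable g μ)
    (hfi : Integrable (fun x => f x ^ r) μ) (hgi : Integrable (fun x => g x ^ s) μ) :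
    ∫ x, f x * g x ∂μ ≤ (∫ x, f x ^ r ∂μ) ^ (1 / r) * (∫ x, g x ^ s ∂μ) ^ (1 / s) :=
  integral_mul_le_Lp_mul_Lq_of_nonneg hrs (Eventually.of_forall hf0) (Eventually.of_forall hg0)
    (memℒp_of_integrable_rpow hrs.lt.le hf0 hfm hfi)
    (memℒp_of_integrable_rpow hrs.symm.lt.le hg0 hgm hgi)


lemma rpow_sub_one_mul {x p : ℝ} (hp1 : 1 < p) (hx : 0 ≤ x) : x ^ (p - 1) * x = x ^ p := by
  rcases eq_or_lt_of_le hx with h | h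
  · rw [← h]; simp [Real.zero_rpow (show p - 1 ≠ 0 by linarith),
      Real.zero_rpow (show p ≠ 0 by linarith)]
  · rw [show x ^ (p-1) * x = x ^ (p-1) * x ^ (1:ℝ) by rw [Real.rpow_one],
      ← Real.rpow_add h]; ring_nf

lemma inner_rpow_bound {E : Type*} [NormedAddCommGroup E] [InnerProductSpace ℝ E]
    {p : ℝ} (hp1 : 1 < p) (hp2 : p < 2) (η ζ : E) :
    |‖η‖ ^ (p - 2) * ⟪η, ζ⟫| ≤ ‖η‖ ^ (p - 1) * ‖ζ‖ := by
  rw [abs_mul, abs_of_nonneg (Real.rpow_nonneg (norm_nonneg η) _)]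
  calc ‖η‖ ^ (p - 2) * |⟪η, ζ⟫| ≤ ‖η‖ ^ (p - 2) * (‖η‖ * ‖ζ‖) :=
        mul_le_mul_of_nonneg_left (abs_real_inner_le_norm η ζ)
          (Real.rpow_nonneg (norm_nonneg η) _)
    _ = ‖η‖ ^ (p - 2) * ‖η‖ * ‖ζ‖ := by ring
    _ = ‖η‖ ^ (p - 1) * ‖ζ‖ := by
        congr 1
        rcases eq_or_lt_of_le (norm_nonneg η) with h | h
        · rw [← h]; simp [Real.zero_rpow (show p - 2 ≠ 0 by linarith),
            Real.zero_rpow (show p - 1 ≠ 0 by linarith)]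
        · exact rpow_sub_two_mul_self h p

lemma G_le_rpow {E : Type*} [NormedAddCommGroup E] {p : ℝ} (hp1 : 1 < p) (hp2 : p < 2)
    (ξ η : E) :
    ‖ξ - η‖ ^ 2 * (‖ξ‖ + ‖η‖) ^ (p - 2) ≤ (‖ξ‖ + ‖η‖) ^ p := by
  rcases eq_or_lt_of_le (show (0:ℝ) ≤ ‖ξ‖ + ‖η‖ by positivity) with h | h
  · have h0 : ‖ξ - η‖ = 0 := by
      have := norm_sub_le ξ η
      linarith [norm_nonneg (ξ - η)]
    rw [← h, h0]
    simp [Real.zero_rpow (show p ≠ 0 by linarith)]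
  · have hd : ‖ξ - η‖ ^ 2 ≤ (‖ξ‖ + ‖η‖) ^ 2 :=
      pow_le_pow_left₀ (norm_nonneg _) (norm_sub_le ξ η) 2
    calc ‖ξ - η‖ ^ 2 * (‖ξ‖ + ‖η‖) ^ (p - 2) ≤ (‖ξ‖ + ‖η‖) ^ 2 * (‖ξ‖ + ‖η‖) ^ (p - 2) :=
          mul_le_mul_of_nonneg_right hd (Real.rpow_nonneg h.le _)
      _ = (‖ξ‖ + ‖η‖) ^ p := by rw [mul_comm]; exact rpow_sub_two_mul_sq h p

lemma rpow_rpow_conj {x p : ℝ} (hp1 : 1 < p) (hx : 0 ≤ x) :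
    (x ^ (p - 1)) ^ (p / (p - 1)) = x ^ p := by
  rw [← Real.rpow_mul hx]
  congr 1
  rw [mul_comm]
  exact div_mul_cancel₀ p (by linarith)

lemma fg_eq {E : Type*} [NormedAddCommGroup E] {p : ℝ} (hp1 : 1 < p) (hp2 : p < 2) (ξ η : E) :
    (‖ξ - η‖ ^ 2 * (‖ξ‖ + ‖η‖) ^ (p - 2)) ^ (p / 2) * ((‖ξ‖ + ‖η‖) ^ p) ^ ((2 - p) / 2)
      = ‖ξ - η‖ ^ p := by
  rcases eq_or_lt_of_le (show (0:ℝ) ≤ ‖ξ‖ + ‖η‖ by positivity) with h | h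
  · have h0 : ‖ξ - η‖ = 0 := by
      have := norm_sub_le ξ η
      linarith [norm_nonneg (ξ - η)]
    rw [← h, h0]
    simp [Real.zero_rpow (show p ≠ 0 by linarith),
      Real.zero_rpow (show p / 2 ≠ 0 from ne_of_gt (by linarith)),
      Real.zero_rpow (show (2 - p) / 2 ≠ 0 from ne_of_gt (by linarith))]
  · have e1 : (‖ξ - η‖ ^ 2 : ℝ) = ‖ξ - η‖ ^ (2:ℝ) := by
      rw [← Real.rpow_natCast ‖ξ - η‖ 2]; norm_num
    rw [e1, Real.mul_rpow (Real.rpow_nonneg (norm_nonneg _) _) (Real.rpow_nonneg h.le _),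
      ← Real.rpow_mul (norm_nonneg _), ← Real.rpow_mul h.le, ← Real.rpow_mul h.le,
      mul_assoc, ← Real.rpow_add h, show (2:ℝ) * (p / 2) = p by ring,
      show (p - 2) * (p / 2) + p * ((2 - p) / 2) = 0 by ring, Real.rpow_zero, mul_one]

lemma rpow_self_mul {x r : ℝ} (hx : 0 ≤ x) (hr : r ≠ 0) : x ^ r * x ^ r = x ^ (2 * r) := by
  rcases eq_or_lt_of_le hx with h | h
  · rw [← h, Real.zero_rpow hr, Real.zero_rpow (by simpa using hr : 2 * r ≠ 0), mul_zero]
  · rw [← Real.rpow_add h, two_mul]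

lemma rpow_div_rpow_inv {x r : ℝ} (hr : r ≠ 0) (hx : 0 ≤ x) : (x ^ r) ^ (r⁻¹) = x := by
  rw [← Real.rpow_mul hx, mul_inv_cancel₀ hr, Real.rpow_one]

end CompEst

open CompEst


/-- Comparison estimate with the `p`-harmonic replacement in the singular
case `1 < p < 2`: `∫_B ‖V − W‖^p ≤ C |B|^{p−1} ( ∫_B ‖V‖^p )^{2−p}`, with `C` depending
only on `p, N, a, ℓ, M`. -/
theorem comparison_estimate_p_lt_two
    (N : ℕ) (hN : 2 ≤ N)
    (p a ℓ M : ℝ) (hp1 : 1 < p) (hp2 : p < 2) (ha : 0 < a) (hℓ : 0 < ℓ) (hM : 0 < M) :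
    ∃ c : ℝ, 0 < c ∧
      ∀ (R : ℝ), 0 < R → ∀ (X₀ : EuclideanSpace ℝ (Fin N))
        (u χ : EuclideanSpace ℝ (Fin N) → ℝ)
        (V W : EuclideanSpace ℝ (Fin N) → EuclideanSpace ℝ (Fin N)),
        (∀ᵐ X ∂(volume.restrict (ball X₀ (2 * R))), |u X| ≤ M) →
        Measurable χ → (∀ X, χ X ∈ Icc (0:ℝ) 1) →
        MemLp V (ENNReal.ofReal p) (volume.restrict (ball X₀ (2 * R))) →
        MemLp W (ENNReal.ofReal p) (volume.restrict (ball X₀ (2 * R))) →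
        (∫ X in ball X₀ (2 * R), ‖V X‖ ^ (p - 2) * ⟪V X, V X - W X⟫
          = ∫ X in ball X₀ (2 * R),
              (a * u X + ℓ * χ X) * (V X ⟨N - 1, by omega⟩ - W X ⟨N - 1, by omega⟩)) →
        (∫ X in ball X₀ (2 * R), ‖W X‖ ^ (p - 2) * ⟪W X, V X - W X⟫ = 0) →
        ∫ X in ball X₀ (2 * R), ‖V X - W X‖ ^ p ≤
          c * (volume (ball X₀ (2 * R))).toReal ^ (p - 1) *
            (∫ X in ball X₀ (2 * R), ‖V X‖ ^ p) ^ (2 - p) := by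
  have hp0 : (0:ℝ) < p := by linarith
  set μc : ℝ := min (p - 1) 2⁻¹ with hμcdef
  have hμc0 : 0 < μc := lt_min (by linarith) (by norm_num)
  set C₁ : ℝ := (a * M + ℓ) / μc with hC1def
  have hC10 : 0 < C₁ := div_pos (by positivity) hμc0
  set K : ℝ := C₁ ^ (p / 2) * 2 ^ (p * (2 - p) / 2) with hKdef
  have hK0 : 0 < K := mul_pos (Real.rpow_pos_of_pos hC10 _) (Real.rpow_pos_of_pos two_pos _)
  refine ⟨K ^ 2, by positivity, ?_⟩
  intro R hR X₀ u χ V W hu hχm hχ01 hV hW hyp1 hyp2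
  set B : Set (EuclideanSpace ℝ (Fin N)) := ball X₀ (2 * R) with hBdef
  set ν : Measure (EuclideanSpace ℝ (Fin N)) := volume.restrict B with hνdef
  haveI : IsFiniteMeasure ν := ⟨by rw [hνdef, Measure.restrict_apply_univ]; exact measure_ball_lt_top⟩
  have hpne : ENNReal.ofReal p ≠ 0 := by simp [ENNReal.ofReal_eq_zero, not_le, hp0]
  have hpt : (ENNReal.ofReal p).toReal = p := ENNReal.toReal_ofReal hp0.le
  have hq : (p / (p - 1)).HolderConjugate p :=
    ((Real.holderConjugate_iff_eq_conjExponent hp1).mpr rfl : p.HolderConjugate (p / (p - 1))).symm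
  -- basic memℒp / integrability facts
  have hVWm : MemLp (fun X => V X - W X) (ENNReal.ofReal p) ν := hV.sub hW
  have iVp : Integrable (fun X => ‖V X‖ ^ p) ν := by
    have h := hV.integrable_norm_rpow hpne ENNReal.ofReal_ne_top; rwa [hpt] at h
  have iWp : Integrable (fun X => ‖W X‖ ^ p) ν := by
    have h := hW.integrable_norm_rpow hpne ENNReal.ofReal_ne_top; rwa [hpt] at h
  have iVWp : Integrable (fun X => ‖V X - W X‖ ^ p) ν := by
    have h := hVWm.integrable_norm_rpow hpne ENNReal.ofReal_ne_top; rwa [hpt] at h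
  have hSVm : MemLp (fun X => ‖V X‖ + ‖W X‖) (ENNReal.ofReal p) ν := hV.norm.add hW.norm
  have iS : Integrable (fun X => (‖V X‖ + ‖W X‖) ^ p) ν := by
    have h := hSVm.integrable_norm_rpow hpne ENNReal.ofReal_ne_top
    rw [hpt] at h
    refine h.congr (Eventually.of_forall fun X => ?_)
    simp [Real.norm_of_nonneg (by positivity : (0:ℝ) ≤ ‖V X‖ + ‖W X‖)]
  have mnV : AEMeasurable (fun X => ‖V X‖) ν := hV.1.norm.aemeasurable
  have mnW : AEMeasurable (fun X => ‖W X‖) ν := hW.1.norm.aemeasurable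
  have mnVW : AEMeasurable (fun X => ‖V X - W X‖) ν := hVWm.1.norm.aemeasurable
  have mS : AEMeasurable (fun X => ‖V X‖ + ‖W X‖) ν := mnV.add mnW
  have mG : AEMeasurable (fun X => ‖V X - W X‖ ^ 2 * (‖V X‖ + ‖W X‖) ^ (p - 2)) ν :=
    (mnVW.pow aemeasurable_const).mul (mS.pow aemeasurable_const)
  have hG0 : ∀ X, 0 ≤ ‖V X - W X‖ ^ 2 * (‖V X‖ + ‖W X‖) ^ (p - 2) := fun X =>
    mul_nonneg (by positivity) (Real.rpow_nonneg (by positivity) _)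
  have iG : Integrable (fun X => ‖V X - W X‖ ^ 2 * (‖V X‖ + ‖W X‖) ^ (p - 2)) ν := by
    refine iS.mono' mG.aestronglyMeasurable (Eventually.of_forall fun X => ?_)
    rw [Real.norm_of_nonneg (hG0 X)]
    exact G_le_rpow hp1 hp2 (V X) (W X)
  -- conjugate memℒp facts
  have hdivq : ENNReal.ofReal p / ENNReal.ofReal (p - 1) = ENNReal.ofReal (p / (p - 1)) :=
    (ENNReal.ofReal_div_of_pos (by linarith)).symm
  have hWq : MemLp (fun X => ‖W X‖ ^ (p - 1)) (ENNReal.ofReal (p / (p - 1))) ν := by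
    have h := hW.norm_rpow_div (ENNReal.ofReal (p - 1))
    rw [ENNReal.toReal_ofReal (by linarith : (0:ℝ) ≤ p - 1), hdivq] at h
    exact h
  have hVq : MemLp (fun X => ‖V X‖ ^ (p - 1)) (ENNReal.ofReal (p / (p - 1))) ν := by
    have h := hV.norm_rpow_div (ENNReal.ofReal (p - 1))
    rw [ENNReal.toReal_ofReal (by linarith : (0:ℝ) ≤ p - 1), hdivq] at h
    exact h
  have iWV : Integrable (fun X => ‖W X‖ ^ (p - 1) * ‖V X‖) ν :=
    integrable_mul_holder hq hWq hV.norm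
  have iVWmul : Integrable (fun X => ‖V X‖ ^ (p - 1) * ‖W X‖) ν :=
    integrable_mul_holder hq hVq hW.norm
  have iVVW : Integrable (fun X => ‖V X‖ ^ (p - 1) * ‖V X - W X‖) ν :=
    integrable_mul_holder hq hVq hVWm.norm
  have iWVW : Integrable (fun X => ‖W X‖ ^ (p - 1) * ‖V X - W X‖) ν :=
    integrable_mul_holder hq hWq hVWm.norm
  -- the two integrands P and Q are integrable
  have mP : AEMeasurable (fun X => ‖V X‖ ^ (p - 2) * ⟪V X, V X - W X⟫) ν :=
    (mnV.pow aemeasurable_const).mul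
      ((hV.1.inner (hVWm.1)).aemeasurable)
  have mQ : AEMeasurable (fun X => ‖W X‖ ^ (p - 2) * ⟪W X, V X - W X⟫) ν :=
    (mnW.pow aemeasurable_const).mul
      ((hW.1.inner (hVWm.1)).aemeasurable)
  have iP : Integrable (fun X => ‖V X‖ ^ (p - 2) * ⟪V X, V X - W X⟫) ν := by
    refine iVVW.mono' mP.aestronglyMeasurable (Eventually.of_forall fun X => ?_)
    rw [Real.norm_eq_abs]
    exact inner_rpow_bound hp1 hp2 (V X) (V X - W X)
  have iQ : Integrable (fun X => ‖W X‖ ^ (p - 2) * ⟪W X, V X - W X⟫) ν := by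
    refine iWVW.mono' mQ.aestronglyMeasurable (Eventually.of_forall fun X => ?_)
    rw [Real.norm_eq_abs]
    exact inner_rpow_bound hp1 hp2 (W X) (V X - W X)
  -- names for the main quantities
  set I : ℝ := ∫ X in B, ‖V X - W X‖ ^ p with hIdef
  set T : ℝ := ∫ X in B, ‖V X‖ ^ p with hTdef
  set TW : ℝ := ∫ X in B, ‖W X‖ ^ p with hTWdef
  set S : ℝ := ∫ X in B, (‖V X‖ + ‖W X‖) ^ p with hSdef
  set D : ℝ := ∫ X in B, ‖V X - W X‖ ^ 2 * (‖V X‖ + ‖W X‖) ^ (p - 2) with hDdef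
  set L1 : ℝ := ∫ X in B, ‖V X - W X‖ with hL1def
  set m : ℝ := (volume B).toReal with hmdef
  have hI0 : 0 ≤ I := integral_nonneg fun X => Real.rpow_nonneg (norm_nonneg _) _
  have hT0 : 0 ≤ T := integral_nonneg fun X => Real.rpow_nonneg (norm_nonneg _) _
  have hTW0 : 0 ≤ TW := integral_nonneg fun X => Real.rpow_nonneg (norm_nonneg _) _
  have hS0 : 0 ≤ S := integral_nonneg fun X => Real.rpow_nonneg (by positivity) _
  have hD0 : 0 ≤ D := integral_nonneg hG0
  have hm0 : 0 ≤ m := ENNReal.toReal_nonneg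
  -- Step (c): TW ≤ T
  have hTWle : TW ≤ T := by
    have hpt1 : ∀ X, ‖W X‖ ^ (p - 2) * ⟪W X, V X - W X⟫
        = ‖W X‖ ^ (p - 2) * ⟪W X, V X⟫ - ‖W X‖ ^ p := by
      intro X
      rw [inner_sub_right, mul_sub]
      congr 1
      rw [real_inner_self_eq_norm_sq]
      exact rpow_sub_two_mul_sq' hp1 hp2 (norm_nonneg _)
    have iWVin : Integrable (fun X => ‖W X‖ ^ (p - 2) * ⟪W X, V X⟫) ν := by
      have mm : AEMeasurable (fun X => ‖W X‖ ^ (p - 2) * ⟪W X, V X⟫) ν :=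
        (mnW.pow aemeasurable_const).mul ((hW.1.inner hV.1).aemeasurable)
      refine iWV.mono' mm.aestronglyMeasurable (Eventually.of_forall fun X => ?_)
      rw [Real.norm_eq_abs]
      exact inner_rpow_bound hp1 hp2 (W X) (V X)
    have heq : TW = ∫ X in B, ‖W X‖ ^ (p - 2) * ⟪W X, V X⟫ := by
      have h2 := hyp2
      simp_rw [hpt1] at h2
      rw [integral_sub iWVin iWp] at h2
      rw [hTWdef]
      linarith [h2]
    have hmono : (∫ X in B, ‖W X‖ ^ (p - 2) * ⟪W X, V X⟫)
        ≤ ∫ X in B, ‖W X‖ ^ (p - 1) * ‖V X‖ := by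
      refine integral_mono iWVin iWV fun X => ?_
      exact le_trans (le_abs_self _) (inner_rpow_bound hp1 hp2 (W X) (V X))
    have hint : Integrable (fun X => (‖W X‖ ^ (p - 1)) ^ (p / (p - 1))) ν := by
      refine iWp.congr (Eventually.of_forall fun X => ?_)
      exact (rpow_rpow_conj hp1 (norm_nonneg _)).symm
    have hH := holder_int hq (f := fun X => ‖W X‖ ^ (p - 1)) (g := fun X => ‖V X‖)
      (fun X => Real.rpow_nonneg (norm_nonneg _) _)
      (fun X => norm_nonneg _) (mnW.pow aemeasurable_const).aestronglyMeasurable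
      mnV.aestronglyMeasurable hint iVp
    have e1 : (∫ X in B, (‖W X‖ ^ (p - 1)) ^ (p / (p - 1))) = TW :=
      integral_congr_ae (Eventually.of_forall fun X => rpow_rpow_conj hp1 (norm_nonneg _))
    rw [e1, one_div_div] at hH
    beta_reduce at hH
    rw [← hTdef] at hH
    have hchain : TW ≤ TW ^ ((p - 1) / p) * T ^ (1 / p) :=
      le_trans (le_of_eq heq) (le_trans hmono hH)
    rcases eq_or_lt_of_le hTW0 with h0 | h0
    · rw [← h0]; exact hT0
    · have e2 : TW = TW ^ ((p - 1) / p) * TW ^ (1 / p) := by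
        rw [← Real.rpow_add h0, ← add_div, sub_add_cancel, div_self (ne_of_gt hp0),
          Real.rpow_one]
      have hfac : 0 < TW ^ ((p - 1) / p) := Real.rpow_pos_of_pos h0 _
      have hpow : TW ^ (1 / p) ≤ T ^ (1 / p) :=
        (mul_le_mul_iff_right₀ hfac).mp (by linarith [hchain, e2])
      calc TW = (TW ^ (1 / p)) ^ p := by
            rw [← Real.rpow_mul hTW0, one_div, inv_mul_cancel₀ (ne_of_gt hp0), Real.rpow_one]
        _ ≤ (T ^ (1 / p)) ^ p := Real.rpow_le_rpow (Real.rpow_nonneg hTW0 _) hpow hp0.le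
        _ = T := by
            rw [← Real.rpow_mul hT0, one_div, inv_mul_cancel₀ (ne_of_gt hp0), Real.rpow_one]
  -- Step (d): μc * D ≤ (a*M + ℓ) * L1
  have hcoer : μc * D ≤ (a * M + ℓ) * L1 := by
    have step1 : μc * D ≤ ∫ X in B, (‖V X‖ ^ (p - 2) * ⟪V X, V X - W X⟫
        - ‖W X‖ ^ (p - 2) * ⟪W X, V X - W X⟫) := by
      rw [hDdef, ← integral_const_mul]
      refine integral_mono (iG.const_mul μc) (iP.sub iQ) fun X => ?_
      exact coercivity hp1 hp2 (V X) (W X)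
    have step2 : (∫ X in B, (‖V X‖ ^ (p - 2) * ⟪V X, V X - W X⟫
        - ‖W X‖ ^ (p - 2) * ⟪W X, V X - W X⟫))
        = ∫ X in B, (a * u X + ℓ * χ X) * (V X ⟨N - 1, by omega⟩ - W X ⟨N - 1, by omega⟩) := by
      rw [integral_sub iP iQ, hyp2, sub_zero, hyp1]
    have step3 : (∫ X in B, (a * u X + ℓ * χ X) * (V X ⟨N - 1, by omega⟩ - W X ⟨N - 1, by omega⟩))
        ≤ (a * M + ℓ) * L1 := by
      have hbd : ∀ᵐ X ∂ν, ‖(a * u X + ℓ * χ X) * (V X ⟨N - 1, by omega⟩ - W X ⟨N - 1, by omega⟩)‖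
          ≤ (a * M + ℓ) * ‖V X - W X‖ := by
        filter_upwards [hu] with X hX
        rw [Real.norm_eq_abs, abs_mul]
        have h1 : |a * u X + ℓ * χ X| ≤ a * M + ℓ := by
          calc |a * u X + ℓ * χ X| ≤ |a * u X| + |ℓ * χ X| := abs_add_le _ _
            _ = a * |u X| + ℓ * |χ X| := by rw [abs_mul, abs_mul, abs_of_pos ha, abs_of_pos hℓ]
            _ ≤ a * M + ℓ * 1 := add_le_add (mul_le_mul_of_nonneg_left hX ha.le)
                (mul_le_mul_of_nonneg_left
                  (abs_le.mpr ⟨by linarith [(hχ01 X).1], (hχ01 X).2⟩) hℓ.le)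
            _ = a * M + ℓ := by ring
        have h2 : |V X ⟨N - 1, by omega⟩ - W X ⟨N - 1, by omega⟩| ≤ ‖V X - W X‖ := by
          have h := coord_le_norm (V X - W X) ⟨N - 1, by omega⟩
          simpa using h
        exact mul_le_mul h1 h2 (abs_nonneg _) (by positivity)
      have hbnd_int : Integrable (fun X => (a * M + ℓ) * ‖V X - W X‖) ν :=
        ((hVWm.integrable (ENNReal.one_le_ofReal.mpr hp1.le)).norm).const_mul _
      calc (∫ X in B, (a * u X + ℓ * χ X) * (V X ⟨N - 1, by omega⟩ - W X ⟨N - 1, by omega⟩))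
          ≤ |∫ X in B, (a * u X + ℓ * χ X) * (V X ⟨N - 1, by omega⟩ - W X ⟨N - 1, by omega⟩)| :=
            le_abs_self _
        _ ≤ ∫ X in B, ‖(a * u X + ℓ * χ X) * (V X ⟨N - 1, by omega⟩ - W X ⟨N - 1, by omega⟩)‖ := by
            rw [← Real.norm_eq_abs]; exact norm_integral_le_integral_norm _
        _ ≤ ∫ X in B, (a * M + ℓ) * ‖V X - W X‖ :=
            integral_mono_of_nonneg (Eventually.of_forall fun X => norm_nonneg _) hbnd_int hbd
        _ = (a * M + ℓ) * L1 := by rw [integral_const_mul]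
    calc μc * D ≤ _ := step1
      _ = _ := step2
      _ ≤ (a * M + ℓ) * L1 := step3
  -- Step (e): L1 ≤ I^(1/p) * m^((p-1)/p)
  have hL1b : L1 ≤ I ^ (1/p) * m ^ ((p-1)/p) := by
    have hone : Integrable (fun _ : EuclideanSpace ℝ (Fin N) => (1:ℝ) ^ (p / (p - 1))) ν := by
      simp only [Real.one_rpow]; exact integrable_const 1
    have hH := holder_int hq.symm (f := fun X => ‖V X - W X‖) (g := fun _ => (1:ℝ))
      (fun X => norm_nonneg _) (fun _ => zero_le_one) mnVW.aestronglyMeasurable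
      aestronglyMeasurable_const iVWp hone
    beta_reduce at hH
    simp only [mul_one, Real.one_rpow] at hH
    rw [← hIdef] at hH
    have e2 : (∫ _ in B, (1:ℝ) ∂volume) = m := by
      rw [setIntegral_const, smul_eq_mul, mul_one, measureReal_def]
    rw [one_div_div] at hH
    calc L1 ≤ I ^ (1/p) * (∫ _ : EuclideanSpace ℝ (Fin N), (1:ℝ) ∂ν) ^ ((p-1)/p) := hH
      _ = I ^ (1/p) * m ^ ((p-1)/p) := by
          rw [show (∫ _ : EuclideanSpace ℝ (Fin N), (1:ℝ) ∂ν) = m by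
            rw [integral_const, smul_eq_mul, mul_one, measureReal_def, hνdef, Measure.restrict_apply_univ]]
  -- Step (f): I ≤ D^(p/2) * S^((2-p)/2)
  have hIb : I ≤ D ^ (p/2) * S ^ ((2-p)/2) := by
    have h2p : (0:ℝ) < 2 - p := by linarith
    have hrs2 : (2/p).HolderConjugate (2/(2-p)) := by
      refine Real.holderConjugate_iff.mpr ⟨(one_lt_div hp0).2 hp2, ?_⟩
      rw [inv_div, inv_div, ← add_div]
      norm_num
    have hf0 : ∀ X, 0 ≤ (‖V X - W X‖ ^ 2 * (‖V X‖ + ‖W X‖) ^ (p - 2)) ^ (p/2) :=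
      fun X => Real.rpow_nonneg (hG0 X) _
    have hg0 : ∀ X, 0 ≤ ((‖V X‖ + ‖W X‖) ^ p) ^ ((2-p)/2) :=
      fun X => Real.rpow_nonneg (Real.rpow_nonneg (by positivity) _) _
    have mf : AEMeasurable
        (fun X => (‖V X - W X‖ ^ 2 * (‖V X‖ + ‖W X‖) ^ (p - 2)) ^ (p/2)) ν :=
      mG.pow aemeasurable_const
    have mg : AEMeasurable (fun X => ((‖V X‖ + ‖W X‖) ^ p) ^ ((2-p)/2)) ν :=
      (mS.pow aemeasurable_const).pow aemeasurable_const
    have hpfe : ∀ X, ((‖V X - W X‖ ^ 2 * (‖V X‖ + ‖W X‖) ^ (p - 2)) ^ (p/2)) ^ (2/p)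
        = ‖V X - W X‖ ^ 2 * (‖V X‖ + ‖W X‖) ^ (p - 2) := by
      intro X
      rw [← Real.rpow_mul (hG0 X), show (p/2) * (2/p) = 1 by
        field_simp, Real.rpow_one]
    have hpge : ∀ X, (((‖V X‖ + ‖W X‖) ^ p) ^ ((2-p)/2)) ^ (2/(2-p))
        = (‖V X‖ + ‖W X‖) ^ p := by
      intro X
      rw [← Real.rpow_mul (Real.rpow_nonneg (by positivity) _),
        show ((2-p)/2) * (2/(2-p)) = 1 by field_simp, Real.rpow_one]
    have ifr : Integrable
        (fun X => ((‖V X - W X‖ ^ 2 * (‖V X‖ + ‖W X‖) ^ (p - 2)) ^ (p/2)) ^ (2/p)) ν :=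
      iG.congr (Eventually.of_forall fun X => (hpfe X).symm)
    have igr : Integrable
        (fun X => (((‖V X‖ + ‖W X‖) ^ p) ^ ((2-p)/2)) ^ (2/(2-p))) ν :=
      iS.congr (Eventually.of_forall fun X => (hpge X).symm)
    have hH := holder_int hrs2 hf0 hg0 mf.aestronglyMeasurable mg.aestronglyMeasurable ifr igr
    beta_reduce at hH
    have e1 : (∫ X : EuclideanSpace ℝ (Fin N),
        ((‖V X - W X‖ ^ 2 * (‖V X‖ + ‖W X‖) ^ (p - 2)) ^ (p/2)
          * ((‖V X‖ + ‖W X‖) ^ p) ^ ((2-p)/2)) ∂ν) = I :=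
      integral_congr_ae (Eventually.of_forall fun X => fg_eq hp1 hp2 (V X) (W X))
    have e2 : (∫ X : EuclideanSpace ℝ (Fin N),
        (((‖V X - W X‖ ^ 2 * (‖V X‖ + ‖W X‖) ^ (p - 2)) ^ (p/2)) ^ (2/p)) ∂ν) = D :=
      integral_congr_ae (Eventually.of_forall fun X => hpfe X)
    have e3 : (∫ X : EuclideanSpace ℝ (Fin N),
        ((((‖V X‖ + ‖W X‖) ^ p) ^ ((2-p)/2)) ^ (2/(2-p))) ∂ν) = S :=
      integral_congr_ae (Eventually.of_forall fun X => hpge X)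
    rw [e1, e2, e3, one_div_div, one_div_div] at hH
    exact hH
  -- Step (g): S ≤ 2^p * T
  have hST : S ≤ 2 ^ p * T := by
    have h1 : S ≤ 2 ^ (p-1) * (T + TW) := by
      calc S ≤ ∫ X in B, 2 ^ (p-1) * (‖V X‖ ^ p + ‖W X‖ ^ p) := by
            refine integral_mono iS ((iVp.add iWp).const_mul _) fun X => ?_
            exact add_rpow_le_two_rpow hp1.le (norm_nonneg _) (norm_nonneg _)
        _ = 2 ^ (p-1) * (T + TW) := by rw [integral_const_mul, integral_add iVp iWp]
    have h2 : (2:ℝ) ^ (p-1) * (T + TW) ≤ 2 ^ (p-1) * (2 * T) := by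
      apply mul_le_mul_of_nonneg_left _ (Real.rpow_nonneg (by norm_num) _)
      linarith
    have h3 : (2:ℝ) ^ (p-1) * 2 = 2 ^ p := by
      rw [show (2:ℝ) ^ (p-1) * 2 = 2 ^ (p-1) * 2 ^ (1:ℝ) by rw [Real.rpow_one],
        ← Real.rpow_add two_pos]
      ring_nf
    calc S ≤ 2 ^ (p-1) * (T + TW) := h1
      _ ≤ 2 ^ (p-1) * (2 * T) := h2
      _ = 2 ^ p * T := by rw [← mul_assoc, h3]
  -- Step (h): conclude
  have hDb : D ≤ C₁ * (I ^ (1/p) * m ^ ((p-1)/p)) := by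
    rw [hC1def, div_mul_eq_mul_div, le_div_iff₀ hμc0]
    calc D * μc = μc * D := by ring
      _ ≤ (a * M + ℓ) * L1 := hcoer
      _ ≤ (a * M + ℓ) * (I ^ (1/p) * m ^ ((p-1)/p)) :=
          mul_le_mul_of_nonneg_left hL1b (by positivity)
  have hRHS0 : 0 ≤ K ^ 2 * m ^ (p-1) * T ^ (2-p) :=
    mul_nonneg (mul_nonneg (by positivity) (Real.rpow_nonneg hm0 _)) (Real.rpow_nonneg hT0 _)
  rcases eq_or_lt_of_le hI0 with hIz | hIpos
  · rw [← hIz]; exact hRHS0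
  · have hmix0 : 0 ≤ C₁ * (I ^ (1/p) * m ^ ((p-1)/p)) :=
      mul_nonneg hC10.le (mul_nonneg (Real.rpow_nonneg hI0 _) (Real.rpow_nonneg hm0 _))
    have hchain : I ≤ (C₁ * (I ^ (1/p) * m ^ ((p-1)/p))) ^ (p/2) * (2 ^ p * T) ^ ((2-p)/2) := by
      refine le_trans hIb (mul_le_mul ?_ ?_ ?_ ?_)
      · exact Real.rpow_le_rpow hD0 hDb (by linarith)
      · exact Real.rpow_le_rpow hS0 hST (by linarith)
      · exact Real.rpow_nonneg hS0 _
      · exact Real.rpow_nonneg hmix0 _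
    have eI : (I ^ (1/p)) ^ (p/2) = I ^ (1/(2:ℝ)) := by
      rw [← Real.rpow_mul hI0]
      congr 1
      field_simp
    have em : (m ^ ((p-1)/p)) ^ (p/2) = m ^ ((p-1)/2) := by
      rw [← Real.rpow_mul hm0]
      congr 1
      field_simp
    have e2p : ((2:ℝ) ^ p) ^ ((2-p)/2) = 2 ^ (p * (2-p) / 2) := by
      rw [← Real.rpow_mul (by norm_num : (0:ℝ) ≤ 2)]
      congr 1
      ring
    have expand : (C₁ * (I ^ (1/p) * m ^ ((p-1)/p))) ^ (p/2) * (2 ^ p * T) ^ ((2-p)/2)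
        = K * (m ^ ((p-1)/2) * T ^ ((2-p)/2)) * I ^ (1/(2:ℝ)) := by
      rw [Real.mul_rpow hC10.le (mul_nonneg (Real.rpow_nonneg hI0 _) (Real.rpow_nonneg hm0 _)),
        Real.mul_rpow (Real.rpow_nonneg hI0 _) (Real.rpow_nonneg hm0 _),
        Real.mul_rpow (Real.rpow_nonneg (by norm_num : (0:ℝ) ≤ 2) _) hT0,
        eI, em, e2p, hKdef]
      ring
    rw [expand] at hchain
    have eII : I = I ^ (1/(2:ℝ)) * I ^ (1/(2:ℝ)) := by
      rw [← Real.rpow_add hIpos]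
      norm_num
    have hpos2 : 0 < I ^ (1/(2:ℝ)) := Real.rpow_pos_of_pos hIpos _
    have hstep : I ^ (1/(2:ℝ)) ≤ K * (m ^ ((p-1)/2) * T ^ ((2-p)/2)) := by
      refine le_of_mul_le_mul_right ?_ hpos2
      calc I ^ (1/(2:ℝ)) * I ^ (1/(2:ℝ)) = I := eII.symm
        _ ≤ K * (m ^ ((p-1)/2) * T ^ ((2-p)/2)) * I ^ (1/(2:ℝ)) := hchain
    have hZ0 : 0 ≤ K * (m ^ ((p-1)/2) * T ^ ((2-p)/2)) :=
      mul_nonneg hK0.le (mul_nonneg (Real.rpow_nonneg hm0 _) (Real.rpow_nonneg hT0 _))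
    have em2 : m ^ ((p-1)/2) * m ^ ((p-1)/2) = m ^ (p-1) := by
      rw [rpow_self_mul hm0 (ne_of_gt (by linarith : (0:ℝ) < (p-1)/2))]
      congr 1
      ring
    have eT2 : T ^ ((2-p)/2) * T ^ ((2-p)/2) = T ^ (2-p) := by
      rw [rpow_self_mul hT0 (ne_of_gt (by linarith : (0:ℝ) < (2-p)/2))]
      congr 1
      ring
    calc I = I ^ (1/(2:ℝ)) * I ^ (1/(2:ℝ)) := eII
      _ ≤ (K * (m ^ ((p-1)/2) * T ^ ((2-p)/2))) * (K * (m ^ ((p-1)/2) * T ^ ((2-p)/2))) :=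
          mul_le_mul hstep hstep hpos2.le hZ0
      _ = K ^ 2 * (m ^ ((p-1)/2) * m ^ ((p-1)/2)) * (T ^ ((2-p)/2) * T ^ ((2-p)/2)) := by ring
      _ = K ^ 2 * m ^ (p-1) * T ^ (2-p) := by rw [em2, eT2]
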